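/- Let n, k, t be integers with n ≥ k ≥ t+2, and let X be a partition of a subset of [n] into t nonempty blocks with |∪X| < n. Then the number of partitions F of [n] into k blocks with X ⊆ F equals S(n - |∪X|, k - t), which is at most S(n-t, k-t), with equality if and only if every block of X is a singleton. -/

import Mathlib

/-- Stirling number of the second kind. -/
def stirling : ℕ → ℕ → ℕ
  | 0, 0 => 1
  | 0, _ + 1 => 0
  | _ + 1, 0 => 0
  | n + 1, k + 1 => stirling n k + (k + 1) * stirling n (k + 1)

lemma stirling_succ_succ (n k : ℕ) :
    stirling (n+1) (k+1) = stirling n k + (k + 1) * stirling n (k + 1) := rfl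

lemma stirling_zero_of_lt : ∀ n k, n < k → stirling n k = 0
  | 0, _ + 1, _ => rfl
  | n + 1, k + 1, h => by
      rw [stirling_succ_succ, stirling_zero_of_lt n k (by omega),
        stirling_zero_of_lt n (k+1) (by omega)]
      ring

lemma stirling_self : ∀ n, stirling n n = 1
  | 0 => rfl
  | n + 1 => by
      rw [stirling_succ_succ, stirling_self n, stirling_zero_of_lt n (n+1) (by omega)]; ring

lemma stirling_le_succ (n k : ℕ) (hk : 1 ≤ k) : stirling n k ≤ stirling (n+1) k := by
  obtain ⟨j, rfl⟩ : ∃ j, k = j + 1 := ⟨k - 1, by omega⟩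
  rw [stirling_succ_succ]
  nlinarith [stirling n j, stirling n (j+1)]

lemma stirling_mono (k : ℕ) (hk : 1 ≤ k) {a b : ℕ} (h : a ≤ b) : stirling a k ≤ stirling b k := by
  induction b with
  | zero => have : a = 0 := by omega
            subst this; rfl
  | succ b ih =>
    rcases Nat.lt_or_ge a (b+1) with h' | h'
    · exact le_trans (ih (by omega)) (stirling_le_succ b k hk)
    · have : a = b + 1 := by omega
      subst this; rfl

lemma stirling_pos (k n : ℕ) (hk : 1 ≤ k) (h : k ≤ n) : 1 ≤ stirling n k := by
  calc 1 = stirling k k := (stirling_self k).symm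
  _ ≤ stirling n k := stirling_mono k hk h

lemma stirling_strict_mono (k : ℕ) (hk : 2 ≤ k) {a b : ℕ} (hab : a < b) (hb : k ≤ b) :
    stirling a k < stirling b k := by
  rcases Nat.lt_or_ge a k with h' | h'
  · rw [stirling_zero_of_lt a k h']
    exact stirling_pos k b (by omega) hb
  · have h1 : stirling a k < stirling (a+1) k := by
      obtain ⟨j, rfl⟩ : ∃ j, k = j + 1 := ⟨k - 1, by omega⟩
      rw [stirling_succ_succ]
      have := stirling_pos (j+1) a (by omega) h'
      nlinarith [stirling a j]
    calc stirling a k < stirling (a+1) k := h1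
    _ ≤ stirling b k := stirling_mono k (by omega) (by omega)

variable {α : Type*} [DecidableEq α]

def IsPartitionOf (s : Finset α) (k : ℕ) (P : Finset (Finset α)) : Prop :=
  P.card = k ∧ (∀ B ∈ P, B.Nonempty) ∧
    (∀ B ∈ P, ∀ C ∈ P, B ≠ C → Disjoint B C) ∧ P.sup id = s

instance (s : Finset α) (k : ℕ) : DecidablePred (IsPartitionOf s k) := by
  intro P; unfold IsPartitionOf; infer_instance

def partitionsOf (s : Finset α) (k : ℕ) : Finset (Finset (Finset α)) :=
  s.powerset.powerset.filter (IsPartitionOf s k)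

lemma mem_partitionsOf {s : Finset α} {k : ℕ} {P : Finset (Finset α)} :
    P ∈ partitionsOf s k ↔ IsPartitionOf s k P := by
  rw [partitionsOf, Finset.mem_filter, and_iff_right_iff_imp]
  intro h
  simp only [Finset.mem_powerset]
  intro B hB
  rw [Finset.mem_powerset]
  rw [← h.2.2.2]
  exact Finset.le_sup (f := id) hB

lemma partitionsOf_empty_zero : partitionsOf (∅ : Finset α) 0 = {∅} := by
  ext P
  simp only [mem_partitionsOf, Finset.mem_singleton, IsPartitionOf]
  constructor
  · rintro ⟨h1, -, -, -⟩
    exact Finset.card_eq_zero.mp h1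
  · rintro rfl
    refine ⟨rfl, by simp, by simp, by simp⟩

lemma partitionsOf_empty_succ (k : ℕ) : partitionsOf (∅ : Finset α) (k+1) = ∅ := by
  ext P
  simp only [mem_partitionsOf, Finset.notMem_empty, iff_false, IsPartitionOf]
  rintro ⟨h1, h2, -, h4⟩
  have : P.Nonempty := Finset.card_pos.mp (by omega)
  obtain ⟨B, hB⟩ := this
  have hBne := h2 B hB
  have : B ⊆ ∅ := by rw [← h4]; exact Finset.le_sup (f := id) hB
  simp [Finset.subset_empty.mp this] at hBne

lemma partitionsOf_insert_zero {s : Finset α} {a : α} (ha : a ∉ s) :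
    partitionsOf (insert a s) 0 = ∅ := by
  ext P
  simp only [mem_partitionsOf, Finset.notMem_empty, iff_false, IsPartitionOf]
  rintro ⟨h1, -, -, h4⟩
  rw [Finset.card_eq_zero.mp h1] at h4
  rw [Finset.sup_empty] at h4
  have : a ∈ (⊥ : Finset α) := h4 ▸ Finset.mem_insert_self a s
  simp at this

lemma mem_sup_id {P : Finset (Finset α)} {x : α} :
    x ∈ P.sup id ↔ ∃ B ∈ P, x ∈ B := by
  simp [Finset.mem_sup]

lemma cardA {s : Finset α} {a : α} (ha : a ∉ s) (k : ℕ) :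
    ((partitionsOf (insert a s) (k+1)).filter (fun P => {a} ∈ P)).card
      = (partitionsOf s k).card := by
  apply Finset.card_bij' (fun P _ => P.erase {a}) (fun Q _ => insert {a} Q)
  · -- left inverse
    intro P hP
    rw [Finset.mem_filter] at hP
    exact Finset.insert_erase hP.2
  · -- right inverse
    intro Q hQ
    rw [mem_partitionsOf] at hQ
    have hQsub : ∀ B ∈ Q, B ⊆ s := fun B hB => hQ.2.2.2 ▸ Finset.le_sup (f := id) hB
    have haQ : {a} ∉ Q := fun h => ha (hQsub _ h (Finset.mem_singleton_self a))
    exact Finset.erase_insert haQ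
  · -- forward maps to
    intro P hP
    rw [Finset.mem_filter, mem_partitionsOf] at hP
    obtain ⟨⟨h1, h2, h3, h4⟩, haP⟩ := hP
    rw [mem_partitionsOf]
    refine ⟨by simp [Finset.card_erase_of_mem haP, h1], fun B hB => h2 B (Finset.mem_of_mem_erase hB),
      fun B hB C hC => h3 B (Finset.mem_of_mem_erase hB) C (Finset.mem_of_mem_erase hC), ?_⟩
    ext x
    rw [mem_sup_id]
    constructor
    · rintro ⟨B, hB, hxB⟩
      have hBne := Finset.ne_of_mem_erase hB
      have hBP := Finset.mem_of_mem_erase hB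
      have haB : a ∉ B := by
        intro haB
        exact Finset.disjoint_left.mp (h3 B hBP {a} haP hBne) haB (Finset.mem_singleton_self a)
      have : x ∈ insert a s := by
        rw [← h4, mem_sup_id]; exact ⟨B, hBP, hxB⟩
      rcases Finset.mem_insert.mp this with rfl | hxs
      · exact absurd hxB haB
      · exact hxs
    · intro hxs
      have : x ∈ insert a s := Finset.mem_insert_of_mem hxs
      rw [← h4, mem_sup_id] at this
      obtain ⟨B, hBP, hxB⟩ := this
      refine ⟨B, Finset.mem_erase_of_ne_of_mem ?_ hBP, hxB⟩
      rintro rfl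
      rw [Finset.mem_singleton] at hxB
      exact ha (hxB ▸ hxs)
  · -- backward maps to
    intro Q hQ
    rw [mem_partitionsOf] at hQ
    obtain ⟨h1, h2, h3, h4⟩ := hQ
    have hQsub : ∀ B ∈ Q, B ⊆ s := fun B hB => h4 ▸ Finset.le_sup (f := id) hB
    have haQ : {a} ∉ Q := by
      intro h
      exact ha (hQsub _ h (Finset.mem_singleton_self a))
    rw [Finset.mem_filter, mem_partitionsOf]
    refine ⟨⟨by rw [Finset.card_insert_of_notMem haQ, h1], ?_, ?_, ?_⟩, Finset.mem_insert_self _ _⟩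
    · intro B hB
      rcases Finset.mem_insert.mp hB with rfl | hB
      · exact ⟨a, Finset.mem_singleton_self a⟩
      · exact h2 B hB
    · intro B hB C hC hBC
      rcases Finset.mem_insert.mp hB with rfl | hB <;> rcases Finset.mem_insert.mp hC with rfl | hC
      · exact absurd rfl hBC
      · rw [Finset.disjoint_singleton_left]
        exact fun h => ha (hQsub _ hC h)
      · rw [Finset.disjoint_singleton_right]
        exact fun h => ha (hQsub _ hB h)
      · exact h3 B hB C hC hBC
    · rw [Finset.sup_insert, h4]
      rw [Finset.insert_eq]; rfl

lemma exists_a_block {s : Finset α} {a : α} {m : ℕ} {P : Finset (Finset α)}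
    (hP : IsPartitionOf (insert a s) m P) :
    ∃ B0 ∈ P, a ∈ B0 := by
  have : a ∈ P.sup id := hP.2.2.2 ▸ Finset.mem_insert_self a s
  rwa [mem_sup_id] at this

lemma a_block_unique {s : Finset α} {a : α} {m : ℕ} {P : Finset (Finset α)}
    (hP : IsPartitionOf (insert a s) m P) {B0 C : Finset α} (hB0 : B0 ∈ P) (haB0 : a ∈ B0)
    (hC : C ∈ P) (haC : a ∈ C) : C = B0 := by
  by_contra hne
  exact Finset.disjoint_left.mp (hP.2.2.1 C hC B0 hB0 hne) haC haB0

lemma erase_injOn {s : Finset α} {a : α} {m : ℕ} {P : Finset (Finset α)}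
    (hP : IsPartitionOf (insert a s) m P) :
    Set.InjOn (fun C : Finset α => C.erase a) ↑P := by
  intro C hC D hD h
  simp only [Finset.mem_coe] at hC hD
  dsimp only at h
  by_contra hne
  have hdisj := hP.2.2.1 C hC D hD hne
  rcases Decidable.em (a ∈ C) with haC | haC
  · have haD : a ∉ D := Finset.disjoint_left.mp hdisj haC
    rw [Finset.erase_eq_of_notMem haD] at h
    obtain ⟨x, hx⟩ := hP.2.1 D hD
    exact Finset.disjoint_left.mp hdisj (Finset.mem_of_mem_erase (h ▸ hx : x ∈ C.erase a)) hx
  · rw [Finset.erase_eq_of_notMem haC] at h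
    rcases Decidable.em (a ∈ D) with haD | haD
    · obtain ⟨x, hx⟩ := hP.2.1 C hC
      exact Finset.disjoint_left.mp hdisj hx (Finset.mem_of_mem_erase (h ▸ hx : x ∈ D.erase a))
    · rw [Finset.erase_eq_of_notMem haD] at h
      exact hne h

lemma erase_block_nonempty {s : Finset α} {a : α} {m : ℕ} {P : Finset (Finset α)}
    (hP : IsPartitionOf (insert a s) m P) (haP : {a} ∉ P) {C : Finset α} (hC : C ∈ P) :
    (C.erase a).Nonempty := by
  rcases Decidable.em (a ∈ C) with haC | haC
  · have : C ≠ {a} := fun h => haP (h ▸ hC)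
    obtain ⟨x, hx, hxa⟩ : ∃ x ∈ C, x ≠ a := by
      by_contra hcon
      push_neg at hcon
      exact this (Finset.eq_singleton_iff_unique_mem.mpr ⟨haC, hcon⟩)
    exact ⟨x, Finset.mem_erase_of_ne_of_mem hxa hx⟩
  · rw [Finset.erase_eq_of_notMem haC]
    exact hP.2.1 C hC

lemma image_erase_mem {s : Finset α} {a : α} (ha : a ∉ s) {k : ℕ} {P : Finset (Finset α)}
    (hP : IsPartitionOf (insert a s) k P) (haP : {a} ∉ P) :
    IsPartitionOf s k (P.image (fun C => C.erase a)) := by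
  obtain ⟨h1, h2, h3, h4⟩ := hP
  refine ⟨?_, ?_, ?_, ?_⟩
  · rw [Finset.card_image_of_injOn (erase_injOn ⟨h1, h2, h3, h4⟩), h1]
  · intro B hB
    obtain ⟨C, hC, rfl⟩ := Finset.mem_image.mp hB
    exact erase_block_nonempty ⟨h1, h2, h3, h4⟩ haP hC
  · intro B hB C hC hBC
    obtain ⟨B', hB', rfl⟩ := Finset.mem_image.mp hB
    obtain ⟨C', hC', rfl⟩ := Finset.mem_image.mp hC
    have : B' ≠ C' := fun h => hBC (by rw [h])
    exact (h3 B' hB' C' hC' this).mono (Finset.erase_subset a B') (Finset.erase_subset a C')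
  · ext x
    rw [mem_sup_id]
    constructor
    · rintro ⟨B, hB, hxB⟩
      obtain ⟨C, hC, rfl⟩ := Finset.mem_image.mp hB
      have hxa : x ≠ a := Finset.ne_of_mem_erase hxB
      have : x ∈ insert a s := by
        rw [← h4, mem_sup_id]
        exact ⟨C, hC, Finset.mem_of_mem_erase hxB⟩
      rcases Finset.mem_insert.mp this with rfl | h
      · exact absurd rfl hxa
      · exact h
    · intro hxs
      have : x ∈ insert a s := Finset.mem_insert_of_mem hxs
      rw [← h4, mem_sup_id] at this
      obtain ⟨C, hC, hxC⟩ := this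
      refine ⟨C.erase a, Finset.mem_image_of_mem _ hC,
        Finset.mem_erase_of_ne_of_mem (fun h => ha (h ▸ hxs)) hxC⟩

lemma image_erase_id {T : Finset (Finset α)} {a : α} (hT : ∀ C ∈ T, a ∉ C) :
    T.image (fun C => C.erase a) = T := by
  ext B
  simp only [Finset.mem_image]
  constructor
  · rintro ⟨C, hC, rfl⟩
    rwa [Finset.erase_eq_of_notMem (hT C hC)]
  · intro hB
    exact ⟨B, hB, Finset.erase_eq_of_notMem (hT B hB)⟩

lemma fiber_card {s : Finset α} {a : α} (ha : a ∉ s) {k : ℕ} {Q : Finset (Finset α)}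
    (hQ : IsPartitionOf s (k+1) Q) :
    (((partitionsOf (insert a s) (k+1)).filter (fun P => {a} ∉ P)).filter
      (fun P => P.image (fun C => C.erase a) = Q)).card = k + 1 := by
  obtain ⟨hq1, hq2, hq3, hq4⟩ := hQ
  have hQsub : ∀ B ∈ Q, B ⊆ s := fun B hB => hq4 ▸ Finset.le_sup (f := id) hB
  have haQ : ∀ B ∈ Q, a ∉ B := fun B hB h => ha (hQsub B hB h)
  rw [← hq1]
  symm
  apply Finset.card_bij (fun E _ => insert (insert a E) (Q.erase E))
  · -- maps to fiber
    intro E hE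
    have haE : a ∉ E := haQ E hE
    have hEne := hq2 E hE
    have hnotin : insert a E ∉ Q.erase E := fun h =>
      haQ _ (Finset.mem_of_mem_erase h) (Finset.mem_insert_self a E)
    have hEsup : E ∪ (Q.erase E).sup id = s := by
      rw [← hq4]
      conv_rhs => rw [← Finset.insert_erase hE]
      rw [Finset.sup_insert]
      simp [Finset.sup_eq_union]
    rw [Finset.mem_filter, Finset.mem_filter, mem_partitionsOf]
    refine ⟨⟨⟨?_, ?_, ?_, ?_⟩, ?_⟩, ?_⟩
    · rw [Finset.card_insert_of_notMem hnotin, Finset.card_erase_of_mem hE, hq1]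
      omega
    · intro B hB
      rcases Finset.mem_insert.mp hB with rfl | hB
      · exact ⟨a, Finset.mem_insert_self a E⟩
      · exact hq2 B (Finset.mem_of_mem_erase hB)
    · intro B hB C hC hBC
      rcases Finset.mem_insert.mp hB with rfl | hB <;> rcases Finset.mem_insert.mp hC with rfl | hC
      · exact absurd rfl hBC
      · rw [Finset.disjoint_insert_left]
        exact ⟨haQ C (Finset.mem_of_mem_erase hC),
          hq3 E hE C (Finset.mem_of_mem_erase hC) (Finset.ne_of_mem_erase hC).symm⟩
      · rw [Finset.disjoint_insert_right]
        exact ⟨haQ B (Finset.mem_of_mem_erase hB),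
          (hq3 E hE B (Finset.mem_of_mem_erase hB) (Finset.ne_of_mem_erase hB).symm).symm⟩
      · exact hq3 B (Finset.mem_of_mem_erase hB) C (Finset.mem_of_mem_erase hC) hBC
    · rw [Finset.sup_insert, id, Finset.sup_eq_union, Finset.insert_union, hEsup]
    · -- {a} ∉ P'
      intro h
      rcases Finset.mem_insert.mp h with h' | h'
      · obtain ⟨x, hx⟩ := hEne
        have : x ∈ ({a} : Finset α) := h' ▸ Finset.mem_insert_of_mem hx
        rw [Finset.mem_singleton] at this
        exact haE (this ▸ hx)
      · exact haQ _ (Finset.mem_of_mem_erase h') (Finset.mem_singleton_self a)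
    · -- image = Q
      rw [Finset.image_insert, Finset.erase_insert haE]
      rw [image_erase_id (fun C hC => haQ C (Finset.mem_of_mem_erase hC)),
        Finset.insert_erase hE]
  · -- injective
    intro E hE E' hE' heq
    have : insert a E ∈ insert (insert a E') (Q.erase E') := heq ▸ Finset.mem_insert_self _ _
    rcases Finset.mem_insert.mp this with h | h
    · have := congrArg (fun T => T.erase a) h
      simpa [Finset.erase_insert (haQ E hE), Finset.erase_insert (haQ E' hE')] using this
    · exact absurd (Finset.mem_insert_self a E) (haQ _ (Finset.mem_of_mem_erase h))
  · -- surjective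
    intro P hP
    rw [Finset.mem_filter, Finset.mem_filter, mem_partitionsOf] at hP
    obtain ⟨⟨hPpart, haP⟩, himg⟩ := hP
    obtain ⟨B0, hB0, haB0⟩ := exists_a_block hPpart
    have haOnly : ∀ C ∈ P, C ≠ B0 → a ∉ C := fun C hC hne haC =>
      hne (a_block_unique hPpart hB0 haB0 hC haC)
    refine ⟨B0.erase a, ?_, ?_⟩
    · rw [← himg]
      exact Finset.mem_image_of_mem _ hB0
    · have h1 : insert a (B0.erase a) = B0 := Finset.insert_erase haB0
      have hEP : B0.erase a ∉ P.erase B0 := by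
        intro h
        have hne := Finset.ne_of_mem_erase h
        obtain ⟨x, hx⟩ := erase_block_nonempty hPpart haP hB0
        exact Finset.disjoint_left.mp
          (hPpart.2.2.1 _ (Finset.mem_of_mem_erase h) B0 hB0 hne) hx
          (Finset.mem_of_mem_erase hx)
      have h2 : Q.erase (B0.erase a) = P.erase B0 := by
        have hQeq : Q = insert (B0.erase a) (P.erase B0) := by
          rw [← himg]
          conv_lhs => rw [← Finset.insert_erase hB0]
          rw [Finset.image_insert]
          congr 1
          exact image_erase_id (fun C hC =>
            haOnly C (Finset.mem_of_mem_erase hC) (Finset.ne_of_mem_erase hC))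
        rw [hQeq, Finset.erase_insert hEP]
      rw [h1, h2, Finset.insert_erase hB0]

lemma cardB {s : Finset α} {a : α} (ha : a ∉ s) (k : ℕ) :
    ((partitionsOf (insert a s) (k+1)).filter (fun P => {a} ∉ P)).card
      = (k+1) * (partitionsOf s (k+1)).card := by
  rw [Finset.card_eq_sum_card_fiberwise (f := fun P => P.image (fun C => C.erase a))
    (t := partitionsOf s (k+1)) ?_]
  · rw [Finset.sum_congr rfl (fun Q hQ => fiber_card ha (mem_partitionsOf.mp hQ)),
      Finset.sum_const, smul_eq_mul, mul_comm]
  · intro P hP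
    rw [Finset.mem_coe, Finset.mem_filter, mem_partitionsOf] at hP
    rw [Finset.mem_coe, mem_partitionsOf]
    exact image_erase_mem ha hP.1 hP.2

lemma card_partitionsOf (s : Finset α) : ∀ k, (partitionsOf s k).card = stirling s.card k := by
  induction s using Finset.induction_on with
  | empty =>
    intro k
    cases k with
    | zero => simp [partitionsOf_empty_zero]; rfl
    | succ k => simp [partitionsOf_empty_succ]; rfl
  | insert a s ha ih =>
    intro k
    rw [Finset.card_insert_of_notMem ha]
    cases k with
    | zero => rw [partitionsOf_insert_zero ha]; rfl
    | succ k =>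
      rw [stirling_succ_succ, ← ih k, ← ih (k+1), ← cardA ha k, ← cardB ha k,
        Finset.card_filter_add_card_filter_not]

lemma card_filter_superset {α : Type*} [Fintype α] [DecidableEq α] {k t : ℕ} (hkt : t ≤ k)
    (X : Finset (Finset α)) (hXcard : X.card = t)
    (hXne : ∀ B ∈ X, B.Nonempty)
    (hXdisj : ∀ B ∈ X, ∀ C ∈ X, B ≠ C → Disjoint B C) :
    ((partitionsOf (Finset.univ : Finset α) k).filter (fun F => X ⊆ F)).card
      = (partitionsOf (Finset.univ \ X.sup id) (k - t)).card := by
  set S := X.sup id with hS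
  have hXsubS : ∀ B ∈ X, B ⊆ S := fun B hB => Finset.le_sup (f := id) hB
  apply Finset.card_bij' (fun F _ => F \ X) (fun Q _ => Q ∪ X)
  · -- forward mapsto
    intro F hF
    rw [Finset.mem_filter, mem_partitionsOf] at hF
    obtain ⟨⟨h1, h2, h3, h4⟩, hXF⟩ := hF
    rw [mem_partitionsOf]
    refine ⟨by rw [Finset.card_sdiff_of_subset hXF, h1, hXcard], fun B hB => h2 B (Finset.mem_sdiff.mp hB).1,
      fun B hB C hC => h3 B (Finset.mem_sdiff.mp hB).1 C (Finset.mem_sdiff.mp hC).1, ?_⟩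
    ext x
    rw [mem_sup_id, Finset.mem_sdiff]
    constructor
    · rintro ⟨B, hB, hxB⟩
      obtain ⟨hBF, hBX⟩ := Finset.mem_sdiff.mp hB
      refine ⟨Finset.mem_univ x, ?_⟩
      intro hxS
      rw [hS, mem_sup_id] at hxS
      obtain ⟨C, hCX, hxC⟩ := hxS
      have hne : B ≠ C := fun h => hBX (h ▸ hCX)
      exact Finset.disjoint_left.mp (h3 B hBF C (hXF hCX) hne) hxB hxC
    · rintro ⟨-, hxS⟩
      have : x ∈ F.sup id := h4 ▸ Finset.mem_univ x
      rw [mem_sup_id] at this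
      obtain ⟨B, hBF, hxB⟩ := this
      refine ⟨B, Finset.mem_sdiff.mpr ⟨hBF, fun hBX => hxS ?_⟩, hxB⟩
      rw [hS, mem_sup_id]
      exact ⟨B, hBX, hxB⟩
  · -- backward mapsto
    intro Q hQ
    rw [mem_partitionsOf] at hQ
    obtain ⟨h1, h2, h3, h4⟩ := hQ
    have hQsub : ∀ B ∈ Q, B ⊆ Finset.univ \ S := fun B hB => h4 ▸ Finset.le_sup (f := id) hB
    have hdisjQX : Disjoint Q X := by
      rw [Finset.disjoint_left]
      intro B hBQ hBX
      obtain ⟨x, hx⟩ := h2 B hBQ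
      exact (Finset.mem_sdiff.mp (hQsub B hBQ hx)).2 (hXsubS B hBX hx)
    rw [Finset.mem_filter, mem_partitionsOf]
    refine ⟨⟨?_, ?_, ?_, ?_⟩, Finset.subset_union_right⟩
    · rw [Finset.card_union_of_disjoint hdisjQX, h1, hXcard]
      omega
    · intro B hB
      rcases Finset.mem_union.mp hB with h | h
      · exact h2 B h
      · exact hXne B h
    · intro B hB C hC hBC
      rcases Finset.mem_union.mp hB with hB' | hB' <;> rcases Finset.mem_union.mp hC with hC' | hC'
      · exact h3 B hB' C hC' hBC
      · refine Finset.disjoint_left.mpr fun x hxB hxC =>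
          (Finset.mem_sdiff.mp (hQsub B hB' hxB)).2 (hXsubS C hC' hxC)
      · refine Finset.disjoint_left.mpr fun x hxB hxC =>
          (Finset.mem_sdiff.mp (hQsub C hC' hxC)).2 (hXsubS B hB' hxB)
      · exact hXdisj B hB' C hC' hBC
    · rw [Finset.sup_union, h4]
      rw [Finset.sup_eq_union, ← hS]
      rw [Finset.sdiff_union_of_subset (Finset.subset_univ S)]
  · -- left inverse
    intro F hF
    rw [Finset.mem_filter] at hF
    exact Finset.sdiff_union_of_subset hF.2
  · -- right inverse
    intro Q hQ
    rw [mem_partitionsOf] at hQ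
    apply Finset.union_sdiff_cancel_right
    rw [Finset.disjoint_left]
    intro B hBQ hBX
    have hBsub : B ⊆ Finset.univ \ S := hQ.2.2.2 ▸ Finset.le_sup (f := id) hBQ
    obtain ⟨x, hx⟩ := hQ.2.1 B hBQ
    exact (Finset.mem_sdiff.mp (hBsub hx)).2 (hXsubS B hBX hx)

/-- `P` is a partition of `[n]` into `k` pairwise disjoint nonempty blocks. -/
def IsKPartition (n k : ℕ) (P : Finset (Finset (Fin n))) : Prop :=
  P.card = k ∧ (∀ B ∈ P, B.Nonempty) ∧
    (∀ B ∈ P, ∀ C ∈ P, B ≠ C → Disjoint B C) ∧ P.sup id = Finset.univ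

theorem stmt_14 (n k t : ℕ) (hkt : t + 2 ≤ k) (hnk : k ≤ n)
    (X : Finset (Finset (Fin n))) (hXcard : X.card = t)
    (hXne : ∀ B ∈ X, B.Nonempty)
    (hXdisj : ∀ B ∈ X, ∀ C ∈ X, B ≠ C → Disjoint B C)
    (hXsub : (X.sup id).card < n) :
    {F : Finset (Finset (Fin n)) | IsKPartition n k F ∧ X ⊆ F}.ncard =
        stirling (n - (X.sup id).card) (k - t) ∧
      stirling (n - (X.sup id).card) (k - t) ≤ stirling (n - t) (k - t) ∧
      (stirling (n - (X.sup id).card) (k - t) = stirling (n - t) (k - t) ↔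
        ∀ B ∈ X, B.card = 1) := by
  have hsum : (X.sup id).card = ∑ B ∈ X, B.card := by
    rw [Finset.sup_eq_biUnion]
    exact Finset.card_biUnion hXdisj
  have htm : t ≤ (X.sup id).card := by
    rw [hsum, ← hXcard, Finset.card_eq_sum_ones]
    exact Finset.sum_le_sum fun C hC => Finset.card_pos.mpr (hXne C hC)
  have hset : {F : Finset (Finset (Fin n)) | IsKPartition n k F ∧ X ⊆ F} =
      ↑((partitionsOf (Finset.univ : Finset (Fin n)) k).filter (fun F => X ⊆ F)) := by
    ext F
    rw [Set.mem_setOf_eq, Finset.mem_coe, Finset.mem_filter, mem_partitionsOf]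
    exact Iff.rfl
  have hcount : {F : Finset (Finset (Fin n)) | IsKPartition n k F ∧ X ⊆ F}.ncard =
      stirling (n - (X.sup id).card) (k - t) := by
    rw [hset, Set.ncard_coe_finset,
      card_filter_superset (by omega) X hXcard hXne hXdisj, card_partitionsOf,
      Finset.card_sdiff_of_subset (Finset.subset_univ _), Finset.card_univ, Fintype.card_fin]
  refine ⟨hcount, stirling_mono _ (by omega) (by omega), ?_, ?_⟩
  · intro heq
    by_contra hcon
    push_neg at hcon
    obtain ⟨B, hB, hBcard⟩ := hcon
    have h2B : 2 ≤ B.card := by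
      have := Finset.card_pos.mpr (hXne B hB); omega
    have hmt : t < (X.sup id).card := by
      rw [hsum]
      calc t = ∑ _B ∈ X, 1 := by rw [← hXcard, Finset.card_eq_sum_ones]
      _ < ∑ B ∈ X, B.card :=
        Finset.sum_lt_sum (fun C hC => Finset.card_pos.mpr (hXne C hC)) ⟨B, hB, by omega⟩
    have := stirling_strict_mono (k - t) (by omega)
      (a := n - (X.sup id).card) (b := n - t) (by omega) (by omega)
    omega
  · intro hall
    have : (X.sup id).card = t := by
      rw [hsum, ← hXcard, Finset.card_eq_sum_ones]
      exact Finset.sum_congr rfl hall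
    rw [this]
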